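/- Let q be a prime power and 1 ≤ r ≤ n be integers. Let A be the number of n-dimensional F_q-linear subspaces C of F_q^{r×n} such that every nonzero matrix in C has rank r, and let B be the number of r-dimensional F_q-linear subspaces D of F_q^{n×n} such that every nonzero matrix in D is invertible. Then A · |GL_n(q)| = B · |GL_r(q)|. Equivalently, A/[rn choose n]_q divided by B/[n² choose r]_q equals (|GL_r(q)|/|GL_n(q)|) · ([n² choose r]_q/[rn choose n]_q). -/

import Mathlib

open Matrix Module

section aux

variable {F : Type} [Field F]

/-- Full row rank iff no nonzero left kernel vector. -/
lemma rank_eq_iff_vecMul {r n : ℕ} (M : Matrix (Fin r) (Fin n) F) :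
    M.rank = r ↔ ∀ u : Fin r → F, u ≠ 0 → M.vecMul u ≠ 0 := by
  have h1 : M.rank = r ↔ Function.Injective M.vecMul := by
    rw [Matrix.vecMul_injective_iff, linearIndependent_iff_card_eq_finrank_span,
      Set.finrank, Fintype.card_fin, rank_eq_finrank_span_row, eq_comm]
  rw [h1, ← Matrix.coe_vecMulLinear, ← LinearMap.ker_eq_bot, LinearMap.ker_eq_bot']
  constructor
  · intro h u hu hu0
    exact hu (h u hu0)
  · intro h u hu0
    by_contra hu
    exact h u hu hu0

lemma isUnit_iff_vecMul {n : ℕ} (N : Matrix (Fin n) (Fin n) F) :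
    IsUnit N ↔ ∀ x : Fin n → F, x ≠ 0 → N.vecMul x ≠ 0 := by
  rw [← Matrix.vecMul_injective_iff_isUnit, ← Matrix.coe_vecMulLinear,
    ← LinearMap.ker_eq_bot, LinearMap.ker_eq_bot']
  constructor
  · intro h u hu hu0
    exact hu (h u hu0)
  · intro h u hu0
    by_contra hu
    exact h u hu hu0

/-- Transpose the first two slots of a tensor viewed as a linear family of matrices. -/
noncomputable def swapT {a b c : ℕ} (φ : (Fin a → F) →ₗ[F] Matrix (Fin b) (Fin c) F) :
    (Fin b → F) →ₗ[F] Matrix (Fin a) (Fin c) F :=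
  (Pi.basisFun F (Fin b)).constr F fun k => Matrix.of fun i j => φ (Pi.single i 1) k j

lemma swapT_single {a b c : ℕ} (φ : (Fin a → F) →ₗ[F] Matrix (Fin b) (Fin c) F)
    (k : Fin b) : swapT φ (Pi.single k 1) = Matrix.of fun i j => φ (Pi.single i 1) k j := by
  rw [← Pi.basisFun_apply]
  exact Basis.constr_basis _ _ _ _

lemma swapT_swapT {a b c : ℕ} (φ : (Fin a → F) →ₗ[F] Matrix (Fin b) (Fin c) F) :
    swapT (swapT φ) = φ := by
  refine (Pi.basisFun F (Fin a)).ext fun i => ?_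
  rw [Pi.basisFun_apply, swapT_single]
  ext k j
  rw [Matrix.of_apply, swapT_single, Matrix.of_apply]

lemma single_expand {a : ℕ} (x : Fin a → F) : x = ∑ i, x i • (Pi.single i 1 : Fin a → F) := by
  ext j
  rw [Finset.sum_apply]
  simp [Pi.single_apply]

lemma vecMul_swapT {a b c : ℕ} (φ : (Fin a → F) →ₗ[F] Matrix (Fin b) (Fin c) F)
    (x : Fin a → F) (u : Fin b → F) :
    (swapT φ u).vecMul x = (φ x).vecMul u := by
  have hu : swapT φ u = ∑ k, u k • Matrix.of fun i j => φ (Pi.single i 1) k j := by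
    conv_lhs => rw [single_expand u, map_sum]
    simp [swapT_single]
  have hx : φ x = ∑ i, x i • φ (Pi.single i 1) := by
    conv_lhs => rw [single_expand x, map_sum]
    simp
  funext j
  rw [hu, hx]
  simp only [Matrix.vecMul, dotProduct, Finset.sum_apply, Matrix.sum_apply,
    Matrix.smul_apply, Matrix.of_apply, smul_eq_mul, Finset.mul_sum]
  rw [Finset.sum_comm]
  apply Finset.sum_congr rfl
  intro k _
  apply Finset.sum_congr rfl
  intro i _
  ring

end aux

/-- The generic double-counting step: linear maps `F^m → W` all of whose nonzero values
satisfy `Q` are counted by good subspaces times `|GL_m(q)|`. -/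
lemma count_aux (F : Type) [Field F] [Fintype F] (m : ℕ) (W : Type) [AddCommGroup W]
    [Module F W] [Fintype W] (Q : W → Prop) (hQ0 : ¬ Q 0) :
    Nat.card {φ : (Fin m → F) →ₗ[F] W // ∀ x, x ≠ 0 → Q (φ x)} =
      Nat.card {S : Submodule F W // Module.finrank F S = m ∧ ∀ w ∈ S, w ≠ 0 → Q w} *
      ∏ i ∈ Finset.range m, (Fintype.card F ^ m - Fintype.card F ^ i) := by
  classical
  haveI : Finite ((Fin m → F) →ₗ[F] W) := Finite.of_injective _ DFunLike.coe_injective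
  haveI : Finite (Submodule F W) := Finite.of_injective SetLike.coe SetLike.coe_injective
  have hinj : ∀ φ : {φ : (Fin m → F) →ₗ[F] W // ∀ x, x ≠ 0 → Q (φ x)},
      Function.Injective φ.1 := by
    intro φ
    rw [← LinearMap.ker_eq_bot, LinearMap.ker_eq_bot']
    intro x hx
    by_contra h
    exact hQ0 (hx ▸ φ.2 x h)
  set Maps := {φ : (Fin m → F) →ₗ[F] W // ∀ x, x ≠ 0 → Q (φ x)} with hMaps
  set Good := {S : Submodule F W // Module.finrank F S = m ∧ ∀ w ∈ S, w ≠ 0 → Q w} with hGood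
  haveI : Fintype Good := Fintype.ofFinite _
  haveI : Fintype Maps := Fintype.ofFinite _
  let g : Maps → Good := fun φ =>
    ⟨LinearMap.range φ.1, by
        rw [LinearMap.finrank_range_of_inj (hinj φ), Module.finrank_fintype_fun_eq_card,
          Fintype.card_fin], by
        rintro w ⟨x, rfl⟩ hw
        exact φ.2 x (by rintro rfl; simp at hw)⟩
  have key : ∀ S : Good, Nat.card {φ : Maps // g φ = S} =
      ∏ i ∈ Finset.range m, (Fintype.card F ^ m - Fintype.card F ^ i) := by
    intro S
    -- fiber over S is in bijection with linear isomorphisms F^m ≃ S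
    let f : ((Fin m → F) ≃ₗ[F] S.1) → {φ : Maps // g φ = S} := fun e =>
      ⟨⟨S.1.subtype.comp (e : (Fin m → F) →ₗ[F] S.1), by
          intro x hx
          refine S.2.2 _ (e x).2 ?_
          simp only [LinearMap.comp_apply, Submodule.subtype_apply, ne_eq,
            Submodule.coe_eq_zero]
          exact fun h => hx (by simpa using congrArg e.symm h)⟩, by
        refine Subtype.ext ?_
        show LinearMap.range _ = S.1
        rw [LinearMap.range_comp, LinearEquiv.range, Submodule.map_top,
          Submodule.range_subtype]⟩
    have hf : Function.Bijective f := by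
      constructor
      · intro e e' h
        have := congrArg (fun p => p.1.1) h
        refine LinearEquiv.toLinearMap_injective (LinearMap.ext fun x => Subtype.ext ?_)
        exact congrArg (fun (ψ : (Fin m → F) →ₗ[F] W) => ψ x) this
      · rintro ⟨⟨φ, hφ⟩, hS⟩
        have hrange : LinearMap.range φ = S.1 := congrArg Subtype.val hS
        have hinj' : Function.Injective φ := hinj ⟨φ, hφ⟩
        let c : (Fin m → F) →ₗ[F] S.1 :=
          LinearMap.codRestrict S.1 φ fun x => hrange ▸ LinearMap.mem_range_self φ x
        have hc : Function.Bijective c := by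
          constructor
          · intro x y h
            exact hinj' (congrArg Subtype.val h)
          · rintro ⟨y, hy⟩
            obtain ⟨x, rfl⟩ := (hrange ▸ hy : y ∈ LinearMap.range φ)
            exact ⟨x, rfl⟩
        refine ⟨LinearEquiv.ofBijective c hc, ?_⟩
        refine Subtype.ext (Subtype.ext (LinearMap.ext fun x => rfl))
    rw [← Nat.card_congr (Equiv.ofBijective f hf)]
    -- now count isomorphisms
    haveI : Module.Finite F S.1 := inferInstance
    let bS := Module.finBasisOfFinrankEq F S.1 S.2.1
    let eS : S.1 ≃ₗ[F] (Fin m → F) := bS.equivFun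
    let e2 : ((Fin m → F) ≃ₗ[F] S.1) ≃ ((Fin m → F) ≃ₗ[F] (Fin m → F)) :=
      ⟨fun e => e.trans eS, fun a => a.trans eS.symm,
        fun e => by ext x; simp, fun a => by ext x; simp⟩
    rw [Nat.card_congr e2]
    have e3 : GL (Fin m) F ≃ ((Fin m → F) ≃ₗ[F] (Fin m → F)) :=
      (Matrix.GeneralLinearGroup.toLin.trans
        (LinearMap.GeneralLinearGroup.generalLinearEquiv F (Fin m → F))).toEquiv
    rw [← Nat.card_congr e3, Matrix.card_GL_field]
    exact Fin.prod_univ_eq_prod_range (fun i => Fintype.card F ^ m - Fintype.card F ^ i) m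
  rw [Nat.card_congr (Equiv.sigmaFiberEquiv g).symm, Nat.card_eq_fintype_card,
    Fintype.card_sigma]
  have : ∀ S : Good, Fintype.card {φ : Maps // g φ = S} =
      ∏ i ∈ Finset.range m, (Fintype.card F ^ m - Fintype.card F ^ i) := by
    intro S
    rw [← Nat.card_eq_fintype_card]
    exact key S
  rw [Finset.sum_congr rfl fun S _ => this S, Finset.sum_const, smul_eq_mul,
    ← Nat.card_eq_fintype_card]
  simp [Finset.card_univ, Nat.card_eq_fintype_card]

/-- Let `A` be the number of `n`-dimensional subspaces of `F_q^{r×n}` in which every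
nonzero matrix has rank `r`, and `B` the number of `r`-dimensional subspaces of
`F_q^{n×n}` in which every nonzero matrix is invertible. Then
`A·|GL_n(q)| = B·|GL_r(q)|`. -/
theorem stmt19 (q r n : ℕ) (F : Type) [Field F] [Fintype F] (hq : Fintype.card F = q)
    (hr1 : 1 ≤ r) (hrn : r ≤ n) :
    Nat.card {C : Submodule F (Matrix (Fin r) (Fin n) F) //
        Module.finrank F C = n ∧ ∀ M ∈ C, M ≠ 0 → M.rank = r} *
        (∏ i ∈ Finset.range n, (q ^ n - q ^ i)) =
      Nat.card {D : Submodule F (Matrix (Fin n) (Fin n) F) //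
          Module.finrank F D = r ∧ ∀ M ∈ D, M ≠ 0 → IsUnit M} *
        (∏ i ∈ Finset.range r, (q ^ r - q ^ i)) := by
  subst hq
  have hA := count_aux F n (Matrix (Fin r) (Fin n) F) (fun M => M.rank = r)
    (by simp only [Matrix.rank_zero]; omega)
  have hB := count_aux F r (Matrix (Fin n) (Fin n) F) (fun M => IsUnit M)
    (by
      intro h
      haveI : Nonempty (Fin n) := ⟨⟨0, by omega⟩⟩
      rw [Matrix.isUnit_iff_isUnit_det, Matrix.det_zero] at h
      simp at h)
  rw [← hA, ← hB]
  -- build the bijection between the two sets of linear maps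
  refine Nat.card_congr ?_
  refine ⟨fun φ => ⟨swapT φ.1, ?_⟩, fun ψ => ⟨swapT ψ.1, ?_⟩, ?_, ?_⟩
  · intro u hu
    rw [isUnit_iff_vecMul]
    intro x hx
    rw [vecMul_swapT]
    exact (rank_eq_iff_vecMul _).mp (φ.2 x hx) u hu
  · intro x hx
    rw [rank_eq_iff_vecMul]
    intro u hu
    rw [vecMul_swapT]
    exact (isUnit_iff_vecMul _).mp (ψ.2 u hu) x hx
  · intro φ
    exact Subtype.ext (swapT_swapT φ.1)
  · intro ψ
    exact Subtype.ext (swapT_swapT ψ.1)
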